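/- Let Λ be a nonempty finite subset of Z^d, p ≥ 1 an integer, and let ν be a probability measure on Ω satisfying the moment concentration bound MCB(2p, C_{2p}) for some C_{2p} > 0. Let B_Λ ⊂ S^Λ with ν{ω : ω_Λ ∈ B_Λ} = 1/2, and for ε > 0 let B_{Λ,ε} = {σ ∈ S^Λ : d̄_Λ(σ, B_Λ) ≤ ε|Λ|}, where d̄_Λ(σ,τ) = Σ_{x∈Λ} 1{σ_x ≠ τ_x} and d̄_Λ(σ, B_Λ) = min over τ ∈ B_Λ of d̄_Λ(σ,τ). Then, whenever ε > (2C_{2p})^{1/(2p)}/√|Λ|: ν{ω : ω_Λ ∈ B_{Λ,ε}} ≥ 1 − C_{2p}·|Λ|^{−p}·(ε − (2C_{2p})^{1/(2p)}/√|Λ|)^{−2p}. -/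

import Mathlib

open MeasureTheory Filter

namespace Paper

/-- Sites of the lattice `ℤ^d`. -/
abbrev Site (d : ℕ) := Fin d → ℤ

/-- Configuration space `Ω = S^{ℤ^d}`. -/
abbrev Config (S : Type) (d : ℕ) := Site d → S

variable {S : Type} {d : ℕ}

/-- Shift action: `(T_x ω)_y = ω_{y-x}`. -/
def shift (x : Site d) (ω : Config S d) : Config S d := fun y => ω (y - x)

/-- Oscillation `δ_x(F)` of `F` at site `x`. -/
noncomputable def osc (F : Config S d → ℝ) (x : Site d) : ℝ :=
  sSup {r | ∃ ω ω' : Config S d, (∀ y, y ≠ x → ω y = ω' y) ∧ r = |F ω - F ω'|}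

/-- `‖δ(F)‖₁`. -/
noncomputable def oscNorm1 (F : Config S d → ℝ) : ℝ := ∑' x : Site d, osc F x

/-- `‖δ(F)‖₂²`. -/
noncomputable def oscNorm2sq (F : Config S d → ℝ) : ℝ := ∑' x : Site d, osc F x ^ 2

/-- `‖δ(F)‖₂`. -/
noncomputable def oscNorm2 (F : Config S d → ℝ) : ℝ := Real.sqrt (oscNorm2sq F)

/-- `F ∈ Δ₁(Ω)`: continuous with summable oscillations. -/
def MemDelta1 [TopologicalSpace S] (F : Config S d → ℝ) : Prop :=
  Continuous F ∧ Summable (fun x : Site d => osc F x)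

/-- `F ∈ Δ₂(Ω)`: continuous with square-summable oscillations. -/
def MemDelta2 [TopologicalSpace S] (F : Config S d → ℝ) : Prop :=
  Continuous F ∧ Summable (fun x : Site d => osc F x ^ 2)

/-- Gaussian concentration bound `GCB(D)`. -/
def GCB [TopologicalSpace S] [MeasurableSpace S] (ν : Measure (Config S d)) (D : ℝ) : Prop :=
  ∀ F : Config S d → ℝ, MemDelta2 F →
    ∫ ω, Real.exp (F ω - ∫ ω', F ω' ∂ν) ∂ν ≤ Real.exp (D * oscNorm2sq F)

/-- Moment concentration bound `MCB(2p, C)` of order `2p` with constant `C`. -/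
def MCB [TopologicalSpace S] [MeasurableSpace S] (ν : Measure (Config S d)) (p : ℕ) (C : ℝ) :
    Prop :=
  ∀ F : Config S d → ℝ, MemDelta2 F →
    ∫ ω, (F ω - ∫ ω', F ω' ∂ν) ^ (2 * p) ∂ν ≤ C * (oscNorm2sq F) ^ p

/-- A local function: depends only on finitely many coordinates. -/
def IsLocal (F : Config S d → ℝ) : Prop :=
  ∃ Λ : Finset (Site d), ∀ ω ω' : Config S d, (∀ x ∈ Λ, ω x = ω' x) → F ω = F ω'

/-- The cube `C_n = {x : ‖x‖_∞ ≤ n}`. -/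
noncomputable def cube (d n : ℕ) : Finset (Site d) :=
  Fintype.piFinset (fun _ : Fin d => Finset.Icc (-(n : ℤ)) (n : ℤ))

/-- Sup norm `‖f‖_∞`. -/
noncomputable def supNorm (f : Config S d → ℝ) : ℝ := sSup {r | ∃ ω, r = |f ω|}

/-- Restriction `ω_Λ` of a configuration to `Λ`. -/
def restrictTo (Λ : Finset (Site d)) (ω : Config S d) : {x // x ∈ Λ} → S := fun x => ω x.1

/-- Hamming distance from a pattern `σ` to a set `B` of patterns. -/
noncomputable def hamDistToSet [DecidableEq S] {Λ : Finset (Site d)}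
    (σ : {x // x ∈ Λ} → S) (B : Set ({x // x ∈ Λ} → S)) : ℕ :=
  sInf {n : ℕ | ∃ τ ∈ B, hammingDist σ τ = n}

section Aux

variable [DecidableEq S] {Λ : Finset (Site d)} {B : Set ({x // x ∈ Λ} → S)}

lemma hamDistToSet_le_hammingDist {τ} (hτ : τ ∈ B) (σ) :
    hamDistToSet σ B ≤ hammingDist σ τ :=
  Nat.sInf_le ⟨τ, hτ, rfl⟩

lemma hamDistToSet_eq_zero' {σ} (hσ : σ ∈ B) : hamDistToSet σ B = 0 :=
  Nat.le_zero.mp (by simpa using hamDistToSet_le_hammingDist hσ σ)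

lemma exists_hamDist_min (hB : B.Nonempty) (σ) :
    ∃ τ ∈ B, hammingDist σ τ = hamDistToSet σ B := by
  obtain ⟨τ0, hτ0⟩ := hB
  exact Nat.sInf_mem (⟨_, τ0, hτ0, rfl⟩ : {n : ℕ | ∃ τ ∈ B, hammingDist σ τ = n}.Nonempty)

lemma hamDistToSet_triangle (hB : B.Nonempty) (σ σ') :
    hamDistToSet σ B ≤ hammingDist σ σ' + hamDistToSet σ' B := by
  obtain ⟨τ, hτ, hd⟩ := exists_hamDist_min hB σ'
  calc hamDistToSet σ B ≤ hammingDist σ τ := hamDistToSet_le_hammingDist hτ σ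
  _ ≤ hammingDist σ σ' + hammingDist σ' τ := hammingDist_triangle _ _ _
  _ = _ := by rw [hd]

lemma abs_hamDistToSet_sub_le (hB : B.Nonempty) (σ σ') :
    |(hamDistToSet σ B : ℝ) - (hamDistToSet σ' B : ℝ)| ≤ hammingDist σ σ' := by
  rw [abs_sub_le_iff]
  constructor
  · have := hamDistToSet_triangle hB σ σ'
    have := (Nat.cast_le (α := ℝ)).mpr this
    push_cast at this
    linarith
  · have := hamDistToSet_triangle hB σ' σ
    have := (Nat.cast_le (α := ℝ)).mpr this
    rw [hammingDist_comm] at this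
    push_cast at this
    linarith

end Aux

/-- fattening patterns under a moment concentration bound. -/
theorem fattening_mcb {S : Type} {d : ℕ} [Fintype S] [DecidableEq S] [TopologicalSpace S]
    [DiscreteTopology S] [MeasurableSpace S] [BorelSpace S]
    (Λ : Finset (Site d)) (hΛ : Λ.Nonempty) (p : ℕ) (hp : 1 ≤ p)
    (ν : Measure (Config S d)) [IsProbabilityMeasure ν]
    (C : ℝ) (hC : 0 < C) (hMCB : MCB ν p C)
    (B : Set ({x // x ∈ Λ} → S))
    (hB : ν {ω | restrictTo Λ ω ∈ B} = 1 / 2)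
    (ε : ℝ) (hε : (2 * C) ^ ((1 : ℝ) / (2 * p)) / Real.sqrt (Λ.card : ℝ) < ε) :
    1 - ENNReal.ofReal (C * (Λ.card : ℝ) ^ (-(p : ℝ)) *
        (ε - (2 * C) ^ ((1 : ℝ) / (2 * p)) / Real.sqrt (Λ.card : ℝ)) ^ (-(2 * (p : ℝ)))) ≤
      ν {ω | (hamDistToSet (restrictTo Λ ω) B : ℝ) ≤ ε * (Λ.card : ℝ)} := by
  -- basic notation
  set n : ℝ := (Λ.card : ℝ) with hn_def
  have hn : 0 < n := by rw [hn_def]; exact_mod_cast Finset.card_pos.mpr hΛ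
  set r : ℝ := (2 * C) ^ ((1 : ℝ) / (2 * p)) with hr_def
  have hr : 0 < r := Real.rpow_pos_of_pos (by linarith) _
  have hs : 0 < ε - r / Real.sqrt n := sub_pos.mpr hε
  set s : ℝ := ε - r / Real.sqrt n with hs_def
  -- B is nonempty
  have hBne : B.Nonempty := by
    rcases B.eq_empty_or_nonempty with h | h
    · rw [h] at hB
      simp only [Set.mem_empty_iff_false, Set.setOf_false, measure_empty] at hB
      exact absurd hB.symm (by norm_num)
    · exact h
  set F : Config S d → ℝ := fun ω => (hamDistToSet (restrictTo Λ ω) B : ℝ) with hF_def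
  -- measurability
  have hrestr : Measurable (restrictTo Λ (S := S)) :=
    measurable_pi_lambda _ fun x => measurable_pi_apply x.1
  have hFmeas : Measurable F :=
    (measurable_of_countable fun σ => (hamDistToSet σ B : ℝ)).comp hrestr
  have hFcont : Continuous F := by
    have h1 : Continuous (restrictTo Λ (S := S)) := continuous_pi fun x => continuous_apply x.1
    have h2 : Continuous (fun σ : {x // x ∈ Λ} → S => (hamDistToSet σ B : ℝ)) :=
      continuous_of_discreteTopology
    exact h2.comp h1
  -- Lipschitz property
  have hFlip : ∀ ω ω' : Config S d,
      |F ω - F ω'| ≤ (hammingDist (restrictTo Λ ω) (restrictTo Λ ω') : ℝ) :=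
    fun ω ω' => abs_hamDistToSet_sub_le hBne _ _
  -- oscillations
  have hosc_nonneg : ∀ x, 0 ≤ osc F x := by
    intro x
    apply Real.sSup_nonneg
    rintro r ⟨ω, ω', -, rfl⟩
    exact abs_nonneg _
  have hosc_le : ∀ x ∈ Λ, osc F x ≤ 1 := by
    intro x hx
    apply Real.sSup_le _ zero_le_one
    rintro t ⟨ω, ω', hagree, rfl⟩
    refine (hFlip ω ω').trans ?_
    have hcard : hammingDist (restrictTo Λ ω) (restrictTo Λ ω') ≤ 1 := by
      rw [hammingDist]
      refine le_trans (Finset.card_le_card (t := {(⟨x, hx⟩ : {y // y ∈ Λ})}) ?_) ?_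
      · intro i hi
        simp only [Finset.mem_filter, Finset.mem_univ, true_and] at hi
        simp only [Finset.mem_singleton]
        by_contra hne
        exact hi (hagree i.1 (fun h => hne (Subtype.ext h)))
      · simp
    exact_mod_cast hcard
  have hosc_zero : ∀ x ∉ Λ, osc F x = 0 := by
    intro x hx
    refine le_antisymm (Real.sSup_le ?_ le_rfl) (hosc_nonneg x)
    rintro t ⟨ω, ω', hagree, rfl⟩
    have : restrictTo Λ ω = restrictTo Λ ω' := by
      funext y
      exact hagree y.1 (fun h => hx (h ▸ y.2))
    simp [hF_def, this]
  have hΔ2 : MemDelta2 F := by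
    refine ⟨hFcont, summable_of_ne_finset_zero (s := Λ) fun x hx => ?_⟩
    rw [hosc_zero x hx]; ring
  -- oscillation norm bound
  have hnorm_eq : oscNorm2sq F = ∑ x ∈ Λ, osc F x ^ 2 := by
    apply tsum_eq_sum
    intro x hx
    rw [hosc_zero x hx]; ring
  have hnorm_nonneg : 0 ≤ oscNorm2sq F := by
    rw [hnorm_eq]
    exact Finset.sum_nonneg fun x _ => sq_nonneg _
  have hnorm_le : oscNorm2sq F ≤ n := by
    rw [hnorm_eq, hn_def]
    calc ∑ x ∈ Λ, osc F x ^ 2 ≤ ∑ x ∈ Λ, 1 := by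
          refine Finset.sum_le_sum fun x hx => ?_
          exact pow_le_one₀ (hosc_nonneg x) (hosc_le x hx)
      _ = (Λ.card : ℝ) := by simp
  -- boundedness of F
  have hFbd : ∀ ω, |F ω| ≤ n := by
    intro ω
    obtain ⟨τ, hτ⟩ := hBne
    have h1 : hamDistToSet (restrictTo Λ ω) B ≤ Λ.card := by
      refine (hamDistToSet_le_hammingDist hτ _).trans ?_
      simpa [Fintype.card_coe] using
        (hammingDist_le_card_fintype (x := restrictTo Λ ω) (y := τ))
    have h2 : |F ω| = ((hamDistToSet (restrictTo Λ ω) B : ℕ) : ℝ) :=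
      abs_of_nonneg (Nat.cast_nonneg _)
    rw [h2, hn_def]
    exact_mod_cast h1
  have hFint : Integrable F ν := by
    refine Integrable.mono' (integrable_const n) hFmeas.aestronglyMeasurable ?_
    exact ae_of_all _ fun ω => by simpa [Real.norm_eq_abs] using hFbd ω
  set m : ℝ := ∫ ω, F ω ∂ν with hm_def
  have hm0 : 0 ≤ m := integral_nonneg fun ω => Nat.cast_nonneg _
  -- the centered power function
  set G : Config S d → ℝ := fun ω => (F ω - m) ^ (2 * p) with hG_def
  have hGnonneg : ∀ ω, 0 ≤ G ω := fun ω => (even_two_mul p).pow_nonneg _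
  have hGmeas : Measurable G := (hFmeas.sub measurable_const).pow_const _
  have hGint : Integrable G ν := by
    refine Integrable.mono' (integrable_const ((n + |m|) ^ (2 * p)))
      hGmeas.aestronglyMeasurable (ae_of_all _ fun ω => ?_)
    rw [Real.norm_eq_abs, hG_def, abs_pow]
    refine pow_le_pow_left₀ (abs_nonneg _) ?_ _
    calc |F ω - m| ≤ |F ω| + |m| := abs_sub _ _
      _ ≤ n + |m| := by linarith [hFbd ω]
  -- MCB bound
  have hI : ∫ ω, G ω ∂ν ≤ C * n ^ p := by
    refine le_trans (hMCB F hΔ2) ?_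
    exact mul_le_mul_of_nonneg_left (pow_le_pow_left₀ hnorm_nonneg hnorm_le p) hC.le
  -- lower bound on integral from the event B
  have hA : MeasurableSet {ω | restrictTo Λ ω ∈ B} := by
    have hBmeas : MeasurableSet B := B.toFinite.measurableSet
    exact hrestr hBmeas
  have hmean_bd : m ^ (2 * p) * (1 / 2) ≤ C * n ^ p := by
    have h1 : ∫ ω in {ω | restrictTo Λ ω ∈ B}, G ω ∂ν ≤ ∫ ω, G ω ∂ν :=
      setIntegral_le_integral hGint (ae_of_all _ hGnonneg)
    have h2 : ∫ ω in {ω | restrictTo Λ ω ∈ B}, G ω ∂ν = m ^ (2 * p) * (1 / 2) := by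
      rw [setIntegral_congr_fun hA (g := fun _ => m ^ (2 * p)) ?_]
      · rw [setIntegral_const, measureReal_def, hB, smul_eq_mul]
        norm_num [ENNReal.toReal_div]
        ring
      · intro ω hω
        simp only [Set.mem_setOf_eq] at hω
        simp only [hG_def, hF_def, hamDistToSet_eq_zero' hω]
        rw [Nat.cast_zero, zero_sub, Even.neg_pow (even_two_mul p)]
      
    linarith [h1, hI]
  have hm2p : m ^ (2 * p) ≤ 2 * C * n ^ p := by linarith
  -- mean bound: m ≤ r * sqrt n
  have hq : (0:ℝ) < 2 * p := by positivity
  have hm_le : m ≤ r * Real.sqrt n := by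
    have h1 : (m ^ (2 * p) : ℝ) ^ ((1:ℝ) / (2 * p)) ≤ (2 * C * n ^ p) ^ ((1:ℝ) / (2 * p)) :=
      Real.rpow_le_rpow (pow_nonneg hm0 _) hm2p (by positivity)
    have h2 : (m ^ (2 * p) : ℝ) ^ ((1:ℝ) / (2 * p)) = m := by
      rw [← Real.rpow_natCast m (2 * p), ← Real.rpow_mul hm0]
      rw [show ((2 * p : ℕ) : ℝ) * ((1:ℝ) / (2 * p)) = 1 by
        push_cast
        field_simp]
      exact Real.rpow_one m
    have h3 : (2 * C * n ^ p) ^ ((1:ℝ) / (2 * p)) = r * Real.sqrt n := by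
      rw [Real.mul_rpow (by linarith) (by positivity), hr_def]
      congr 1
      rw [← Real.rpow_natCast n p, ← Real.rpow_mul hn.le]
      rw [show (p : ℝ) * ((1:ℝ) / (2 * p)) = 1 / 2 by
        have : (p : ℝ) ≠ 0 := by positivity
        field_simp]
      exact (Real.sqrt_eq_rpow n).symm
    rw [h2, h3] at h1
    exact h1
  -- the threshold
  set t : ℝ := n * s with ht_def
  have ht : 0 < t := mul_pos hn hs
  have ht_eq : t = ε * n - r * Real.sqrt n := by
    have hdiv : n * (r / Real.sqrt n) = r * Real.sqrt n := by
      rw [show n * (r / Real.sqrt n) = r * (n / Real.sqrt n) by ring, Real.div_sqrt]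
    rw [ht_def, hs_def, mul_sub, hdiv]
    ring
  -- Markov's inequality
  have hmarkov := mul_meas_ge_le_integral_of_nonneg (ae_of_all _ hGnonneg) hGint (t ^ (2 * p))
  have htp : 0 < t ^ (2 * p) := pow_pos ht _
  have hmeasle : (ν {x | t ^ (2 * p) ≤ G x}).toReal ≤ (C * n ^ p) / t ^ (2 * p) := by
    rw [le_div_iff₀ htp]
    have := hmarkov.trans hI
    rw [measureReal_def] at this
    linarith
  have hsub : {ω | ε * n < F ω} ⊆ {x | t ^ (2 * p) ≤ G x} := by
    intro ω hω
    simp only [Set.mem_setOf_eq] at hω ⊢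
    have h1 : t ≤ F ω - m := by rw [ht_eq]; linarith [hm_le, hω]
    exact pow_le_pow_left₀ ht.le h1 _
  have hE : ν {ω | ε * n < F ω} ≤ ENNReal.ofReal ((C * n ^ p) / t ^ (2 * p)) := by
    refine le_trans (measure_mono hsub) ?_
    rw [← ENNReal.ofReal_toReal (measure_ne_top ν _)]
    exact ENNReal.ofReal_le_ofReal hmeasle
  -- identify the bound
  have hbound_eq : (C * n ^ p) / t ^ (2 * p) = C * n ^ (-(p : ℝ)) * s ^ (-(2 * (p : ℝ))) := by
    have h1 : n ^ (-(p : ℝ)) = (n ^ p)⁻¹ := by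
      rw [Real.rpow_neg hn.le, Real.rpow_natCast]
    have h2 : s ^ (-(2 * (p : ℝ))) = (s ^ (2 * p))⁻¹ := by
      rw [show -(2 * (p : ℝ)) = -(((2 * p : ℕ)) : ℝ) by push_cast; ring,
        Real.rpow_neg hs.le, Real.rpow_natCast]
    have hnp : n ^ p ≠ 0 := by positivity
    have hsp : s ^ (2 * p) ≠ 0 := by positivity
    rw [h1, h2, ht_def, mul_pow]
    field_simp
    ring
  -- assemble
  have hT : MeasurableSet {ω | F ω ≤ ε * n} := measurableSet_le hFmeas measurable_const
  have hTc : {ω | F ω ≤ ε * n}ᶜ = {ω | ε * n < F ω} := by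
    ext ω; simp [not_le]
  rw [tsub_le_iff_right]
  calc (1 : ENNReal) = ν {ω | F ω ≤ ε * n} + ν {ω | F ω ≤ ε * n}ᶜ := by
        rw [measure_add_measure_compl hT, measure_univ]
    _ ≤ ν {ω | F ω ≤ ε * n} +
        ENNReal.ofReal (C * n ^ (-(p : ℝ)) * s ^ (-(2 * (p : ℝ)))) := by
        refine add_le_add_right ?_ _
        rw [hTc, ← hbound_eq]
        exact hE


end Paper
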